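/- If f is a G-invariant rational trigonometric polynomial (i.e., f(ω+γ) = f(ω) for all γ ∈ Γ*), then there exists a rational trigonometric polynomial g such that f(ω) = g(M^T ω) for all ω at which f is defined. -/

import Mathlib

noncomputable section

/-- A (complex-valued) trigonometric polynomial in `n` variables: a finite linear
combination of the exponentials `ω ↦ e^{i k·ω}`, `k ∈ ℤⁿ`. -/
def IsTrigPoly {n : ℕ} (f : (Fin n → ℝ) → ℂ) : Prop :=
  ∃ (s : Finset (Fin n → ℤ)) (c : (Fin n → ℤ) → ℂ),
    ∀ ω, f ω = ∑ k ∈ s, c k * Complex.exp (Complex.I * ∑ j, (k j : ℂ) * (ω j : ℂ))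

/-- A real-valued trigonometric polynomial in `n` variables: a finite linear
combination of `cos(k·ω)` and `sin(k·ω)`, `k ∈ ℤⁿ`. -/
def IsTrigPolyR {n : ℕ} (f : (Fin n → ℝ) → ℝ) : Prop :=
  ∃ (s : Finset (Fin n → ℤ)) (a b : (Fin n → ℤ) → ℝ),
    ∀ ω, f ω = ∑ k ∈ s,
      (a k * Real.cos (∑ j, (k j : ℝ) * ω j) + b k * Real.sin (∑ j, (k j : ℝ) * ω j))

/-- `M ∈ Mₙ(ℤ)` is a dilation matrix: all of its (complex) eigenvalues have
modulus strictly greater than 1. -/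
def IsDilation {n : ℕ} (M : Matrix (Fin n) (Fin n) ℤ) : Prop :=
  ∀ μ : ℂ, ((M.map (Int.cast : ℤ → ℂ)).charpoly).IsRoot μ → 1 < ‖μ‖

/-- The action `ω ↦ Mᵀ ω` of the transposed dilation matrix on `ℝⁿ`. -/
def MT {n : ℕ} (M : Matrix (Fin n) (Fin n) ℤ) (ω : Fin n → ℝ) : Fin n → ℝ :=
  (M.map (Int.cast : ℤ → ℝ)).transpose.mulVec ω

/-- `Γ* ⊂ ℝⁿ` is a complete set of distinct coset representatives of
`(2π M⁻ᵀ ℤⁿ)/(2π ℤⁿ)` containing `0`. -/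
def FreqReps {n : ℕ} (M : Matrix (Fin n) (Fin n) ℤ) (Γstar : Finset (Fin n → ℝ)) : Prop :=
  (0 : Fin n → ℝ) ∈ Γstar ∧
  (∀ γ ∈ Γstar, ∃ m : Fin n → ℤ, ∀ i,
    γ i = 2 * Real.pi
      * ((M.map (Int.cast : ℤ → ℝ))⁻¹.transpose.mulVec (fun j => (m j : ℝ)) i)) ∧
  (∀ m : Fin n → ℤ, ∃! γ, γ ∈ Γstar ∧ ∃ l : Fin n → ℤ, ∀ i,
    2 * Real.pi * ((M.map (Int.cast : ℤ → ℝ))⁻¹.transpose.mulVec (fun j => (m j : ℝ)) i)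
      = γ i + 2 * Real.pi * (l i : ℝ))

/-- `Γ ⊂ ℤⁿ` is a complete set of distinct coset representatives of `ℤⁿ/Mℤⁿ`. -/
def SpatialReps {n : ℕ} (M : Matrix (Fin n) (Fin n) ℤ) (Γ : Finset (Fin n → ℤ)) : Prop :=
  ∀ m : Fin n → ℤ, ∃! ν, ν ∈ Γ ∧ ∃ l : Fin n → ℤ, m = ν + M.mulVec l

namespace GinvAux

open Complex Finset Matrix

variable {n : ℕ}

/-- The basic character `ω ↦ e^{i k·ω}`. -/
def tc (k : Fin n → ℤ) : (Fin n → ℝ) → ℂ :=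
  fun ω => Complex.exp (Complex.I * ∑ j, (k j : ℂ) * (ω j : ℂ))

lemma tc_add_arg (k : Fin n → ℤ) (u v : Fin n → ℝ) : tc k (u + v) = tc k u * tc k v := by
  simp only [tc, ← Complex.exp_add]
  congr 1
  rw [← mul_add, ← Finset.sum_add_distrib]
  congr 1
  refine Finset.sum_congr rfl fun j _ => ?_
  simp only [Pi.add_apply]
  push_cast
  ring

lemma tc_two_pi (k l : Fin n → ℤ) : tc k (fun i => 2 * Real.pi * l i) = 1 := by
  have : Complex.I * ∑ j, (k j : ℂ) * ((2 * Real.pi * l j : ℝ) : ℂ)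
      = ((∑ j, k j * l j : ℤ) : ℂ) * (2 * Real.pi * Complex.I) := by
    push_cast
    rw [Finset.sum_mul, Finset.mul_sum]
    refine Finset.sum_congr rfl fun j _ => ?_
    ring
  rw [tc, this, Complex.exp_int_mul_two_pi_mul_I]

lemma tc_periodic (k : Fin n → ℤ) (v : Fin n → ℝ) (l : Fin n → ℤ) :
    tc k (v + fun i => 2 * Real.pi * l i) = tc k v := by
  rw [tc_add_arg, tc_two_pi, mul_one]

lemma tc_mul (k k' : Fin n → ℤ) : tc k * tc k' = tc (k + k') := by
  funext ω
  simp only [Pi.mul_apply, tc, ← Complex.exp_add]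
  congr 1
  rw [← mul_add, ← Finset.sum_add_distrib]
  congr 1
  refine Finset.sum_congr rfl fun j _ => ?_
  simp only [Pi.add_apply]
  push_cast
  ring

/-- Trig polys = span of the characters. -/
lemma isTrigPoly_iff_mem_span {f : (Fin n → ℝ) → ℂ} :
    IsTrigPoly f ↔ f ∈ Submodule.span ℂ (Set.range (tc (n := n))) := by
  constructor
  · rintro ⟨s, c, h⟩
    have hf : f = ∑ k ∈ s, c k • tc k := by
      funext ω
      rw [h ω]
      simp [tc, Finset.sum_apply]
    rw [hf]
    exact Submodule.sum_mem _ fun k _ =>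
      Submodule.smul_mem _ _ (Submodule.subset_span ⟨k, rfl⟩)
  · intro hf
    obtain ⟨c, hc⟩ := Finsupp.mem_span_range_iff_exists_finsupp.1 hf
    refine ⟨c.support, c, fun ω => ?_⟩
    rw [← hc]
    simp [Finsupp.sum, tc, Finset.sum_apply]

lemma trig_mul {f g : (Fin n → ℝ) → ℂ} (hf : IsTrigPoly f) (hg : IsTrigPoly g) :
    IsTrigPoly (fun ω => f ω * g ω) := by
  rw [isTrigPoly_iff_mem_span] at hf hg ⊢
  have h : (fun ω => f ω * g ω) = f * g := rfl
  rw [h]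
  have := Submodule.mul_mem_mul hf hg
  rw [Submodule.span_mul_span] at this
  refine Submodule.span_le.2 ?_ this
  rw [Set.mul_subset_iff]
  rintro x ⟨k, rfl⟩ y ⟨k', rfl⟩
  exact Submodule.subset_span ⟨k + k', (tc_mul k k').symm⟩

lemma trig_translate {f : (Fin n → ℝ) → ℂ} (hf : IsTrigPoly f) (γ : Fin n → ℝ) :
    IsTrigPoly (fun ω => f (ω + γ)) := by
  obtain ⟨s, c, h⟩ := hf
  refine ⟨s, fun k => c k * tc k γ, fun ω => ?_⟩
  show f (ω + γ) = _
  rw [h (ω + γ)]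
  refine Finset.sum_congr rfl fun k _ => ?_
  have : Complex.exp (Complex.I * ∑ j, (k j : ℂ) * ((ω + γ) j : ℂ)) = tc k (ω + γ) := rfl
  rw [this, tc_add_arg]
  show c k * (tc k ω * tc k γ) = c k * tc k γ * tc k ω
  ring

lemma isTrigPoly_const (z : ℂ) : IsTrigPoly (fun _ : Fin n → ℝ => z) := by
  refine ⟨{0}, fun _ => z, fun ω => ?_⟩
  simp

lemma isTrigPoly_prod {ι : Type*} (t : Finset ι) (F : ι → (Fin n → ℝ) → ℂ)
    (h : ∀ i ∈ t, IsTrigPoly (F i)) : IsTrigPoly (fun ω => ∏ i ∈ t, F i ω) := by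
  classical
  induction t using Finset.induction_on with
  | empty => simpa using isTrigPoly_const (n := n) 1
  | @insert a s hx ih =>
      simp only [Finset.prod_insert hx]
      exact trig_mul (h a (Finset.mem_insert_self a s))
        (ih fun i hi => h i (Finset.mem_insert_of_mem hi))

lemma trig_periodic {f : (Fin n → ℝ) → ℂ} (hf : IsTrigPoly f) (v : Fin n → ℝ)
    (l : Fin n → ℤ) : f (v + fun i => 2 * Real.pi * l i) = f v := by
  obtain ⟨s, c, h⟩ := hf
  rw [h, h v]
  refine Finset.sum_congr rfl fun k _ => ?_
  have : ∀ u, Complex.exp (Complex.I * ∑ j, (k j : ℂ) * ((u : Fin n → ℝ) j : ℂ)) = tc k u :=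
    fun u => rfl
  rw [this, this, tc_periodic]

end GinvAux

namespace GinvAux

open Complex Finset Matrix

variable {n : ℕ} {M : Matrix (Fin n) (Fin n) ℤ}

/-- Real cast of `M`. -/
abbrev Mr (M : Matrix (Fin n) (Fin n) ℤ) : Matrix (Fin n) (Fin n) ℝ :=
  M.map (Int.cast : ℤ → ℝ)

lemma det_ne_zero (hdil : IsDilation M) : (Mr M).det ≠ 0 := by
  have hZ : M.det ≠ 0 := by
    intro h
    have hC : (M.map (Int.cast : ℤ → ℂ)).det = 0 := by
      have : (M.map (Int.cast : ℤ → ℂ)).det = ((M.det : ℤ) : ℂ) := by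
        rw [show (M.map (Int.cast : ℤ → ℂ)) = (Int.castRingHom ℂ).mapMatrix M from rfl,
          ← RingHom.map_det]
        rfl
      rw [this, h]; simp
    have hroot : ((M.map (Int.cast : ℤ → ℂ)).charpoly).IsRoot 0 := by
      rw [Polynomial.IsRoot, ← Polynomial.coeff_zero_eq_eval_zero]
      have := Matrix.det_eq_sign_charpoly_coeff (M.map (Int.cast : ℤ → ℂ))
      rw [hC] at this
      have h2 : ((-1 : ℂ)) ^ (Fintype.card (Fin n)) ≠ 0 := by
        simp [pow_ne_zero]
      field_simp at this
      exact (mul_eq_zero.1 this.symm).resolve_left h2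
    have := hdil 0 hroot
    norm_num at this
  have : (Mr M).det = ((M.det : ℤ) : ℝ) := by
    rw [show (Mr M) = (Int.castRingHom ℝ).mapMatrix M from rfl, ← RingHom.map_det]
    rfl
  rw [this]
  exact_mod_cast hZ

lemma inv_mul_self (hdil : IsDilation M) : (Mr M)⁻¹ * (Mr M) = 1 :=
  Matrix.nonsing_inv_mul _ (isUnit_iff_ne_zero.2 (det_ne_zero hdil))

lemma mul_inv_self (hdil : IsDilation M) : (Mr M) * (Mr M)⁻¹ = 1 :=
  Matrix.mul_nonsing_inv _ (isUnit_iff_ne_zero.2 (det_ne_zero hdil))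

lemma cast_mulVec (l : Fin n → ℤ) :
    (fun j => ((M.mulVec l) j : ℝ)) = (Mr M).mulVec (fun j => (l j : ℝ)) := by
  funext i
  simp only [Matrix.mulVec, dotProduct, Matrix.map_apply]
  push_cast
  rfl

/-- Two elements of Γ* congruent mod 2πℤⁿ are equal. -/
lemma rep_eq {Γstar : Finset (Fin n → ℝ)} (hΓ : FreqReps M Γstar) {γ₁ γ₂ : Fin n → ℝ}
    (h₁ : γ₁ ∈ Γstar) (h₂ : γ₂ ∈ Γstar) (l : Fin n → ℤ)
    (h : ∀ i, γ₁ i = γ₂ i + 2 * Real.pi * l i) : γ₁ = γ₂ := by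
  obtain ⟨m, hm⟩ := hΓ.2.1 γ₁ h₁
  obtain ⟨γ', _, huniq⟩ := hΓ.2.2 m
  have e1 : γ₁ = γ' := huniq γ₁ ⟨h₁, 0, fun i => by simp [← hm i]⟩
  have e2 : γ₂ = γ' := huniq γ₂ ⟨h₂, l, fun i => by rw [← hm i, h i]⟩
  rw [e1, e2]

/-- Translation by `γ' ∈ Γ*` acts as a bijection on Γ* modulo 2πℤⁿ. -/
lemma shift_bij {Γstar : Finset (Fin n → ℝ)} (hΓ : FreqReps M Γstar) {γ' : Fin n → ℝ}
    (hγ' : γ' ∈ Γstar) :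
    ∃ σ : (Fin n → ℝ) → (Fin n → ℝ),
      (∀ γ ∈ Γstar, σ γ ∈ Γstar) ∧
      (∀ γ₁ ∈ Γstar, ∀ γ₂ ∈ Γstar, σ γ₁ = σ γ₂ → γ₁ = γ₂) ∧
      (∀ γ ∈ Γstar, ∃ l : Fin n → ℤ, ∀ i, γ' i + γ i = σ γ i + 2 * Real.pi * l i) := by
  classical
  choose mfun hmfun using hΓ.2.1
  have hex : ∀ m : Fin n → ℤ, ∃ γ, γ ∈ Γstar ∧ ∃ l : Fin n → ℤ, ∀ i,
      2 * Real.pi * ((Mr M)⁻¹.transpose.mulVec (fun j => ((m j : ℝ))) i)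
        = γ i + 2 * Real.pi * (l i : ℝ) := fun m => (hΓ.2.2 m).exists
  choose rep hrepmem hrepl using hex
  have key : ∀ γ (hγ : γ ∈ Γstar), ∃ l : Fin n → ℤ, ∀ i,
      γ' i + γ i = rep (mfun γ' hγ' + mfun γ hγ) i + 2 * Real.pi * l i := by
    intro γ hγ
    obtain ⟨l, hl⟩ := hrepl (mfun γ' hγ' + mfun γ hγ)
    refine ⟨l, fun i => ?_⟩
    have hcast : (fun j => (((mfun γ' hγ' + mfun γ hγ) j : ℤ) : ℝ))
        = (fun j => ((mfun γ' hγ' j : ℝ))) + (fun j => ((mfun γ hγ j : ℝ))) := by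
      funext j
      simp only [Pi.add_apply]
      push_cast
      ring
    have hadd : 2 * Real.pi
        * ((Mr M)⁻¹.transpose.mulVec (fun j => (((mfun γ' hγ' + mfun γ hγ) j : ℤ) : ℝ)) i)
        = γ' i + γ i := by
      rw [hcast, Matrix.mulVec_add]
      simp only [Pi.add_apply]
      rw [mul_add, ← hmfun γ' hγ' i, ← hmfun γ hγ i]
    rw [← hadd]
    exact hl i
  refine ⟨fun γ => if h : γ ∈ Γstar then rep (mfun γ' hγ' + mfun γ h) else γ, ?_, ?_, ?_⟩
  · intro γ hγ
    simp only [dif_pos hγ]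
    exact hrepmem _
  · intro γ₁ h₁ γ₂ h₂ hσ
    have hσ' : rep (mfun γ' hγ' + mfun γ₁ h₁) = rep (mfun γ' hγ' + mfun γ₂ h₂) := by
      have : (if h : γ₁ ∈ Γstar then rep (mfun γ' hγ' + mfun γ₁ h) else γ₁)
          = (if h : γ₂ ∈ Γstar then rep (mfun γ' hγ' + mfun γ₂ h) else γ₂) := hσ
      rwa [dif_pos h₁, dif_pos h₂] at this
    obtain ⟨l₁, hl₁⟩ := key γ₁ h₁
    obtain ⟨l₂, hl₂⟩ := key γ₂ h₂
    refine rep_eq hΓ h₁ h₂ (l₁ - l₂) fun i => ?_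
    have e1 := hl₁ i
    have e2 := hl₂ i
    rw [hσ'] at e1
    push_cast [Pi.sub_apply]
    linarith
  · intro γ hγ
    obtain ⟨l, hl⟩ := key γ hγ
    refine ⟨l, fun i => ?_⟩
    simp only [dif_pos hγ]
    exact hl i

end GinvAux

namespace GinvAux

open Complex Finset Matrix

variable {n : ℕ} {M : Matrix (Fin n) (Fin n) ℤ}

lemma sum_shift {Γstar : Finset (Fin n → ℝ)} (hΓ : FreqReps M Γstar) {γ' : Fin n → ℝ}
    (hγ' : γ' ∈ Γstar) (F : (Fin n → ℝ) → ℂ)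
    (hF : ∀ v (l : Fin n → ℤ), F (v + fun i => 2 * Real.pi * l i) = F v) :
    ∑ γ ∈ Γstar, F (γ' + γ) = ∑ γ ∈ Γstar, F γ := by
  obtain ⟨σ, hmaps, hinj, hl⟩ := shift_bij hΓ hγ'
  refine Finset.sum_bij (fun γ _ => σ γ) (fun a ha => hmaps a ha)
    (fun a₁ h₁ a₂ h₂ h => hinj a₁ h₁ a₂ h₂ h) ?_ ?_
  · intro b hb
    obtain ⟨a, ha, hab⟩ := Finset.surj_on_of_inj_on_of_card_le (fun γ _ => σ γ)
      (fun a ha => hmaps a ha) (fun a₁ a₂ h₁ h₂ h => hinj a₁ h₁ a₂ h₂ h) le_rfl b hb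
    exact ⟨a, ha, hab.symm⟩
  · intro a ha
    obtain ⟨l, hli⟩ := hl a ha
    have h : γ' + a = σ a + fun i => 2 * Real.pi * l i := funext fun i => by
      simpa using hli i
    rw [h, hF]

lemma prod_shift {Γstar : Finset (Fin n → ℝ)} (hΓ : FreqReps M Γstar) {γ' : Fin n → ℝ}
    (hγ' : γ' ∈ Γstar) (F : (Fin n → ℝ) → ℂ)
    (hF : ∀ v (l : Fin n → ℤ), F (v + fun i => 2 * Real.pi * l i) = F v) :
    ∏ γ ∈ Γstar, F (γ' + γ) = ∏ γ ∈ Γstar, F γ := by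
  obtain ⟨σ, hmaps, hinj, hl⟩ := shift_bij hΓ hγ'
  refine Finset.prod_bij (fun γ _ => σ γ) (fun a ha => hmaps a ha)
    (fun a₁ h₁ a₂ h₂ h => hinj a₁ h₁ a₂ h₂ h) ?_ ?_
  · intro b hb
    obtain ⟨a, ha, hab⟩ := Finset.surj_on_of_inj_on_of_card_le (fun γ _ => σ γ)
      (fun a ha => hmaps a ha) (fun a₁ a₂ h₁ h₂ h => hinj a₁ h₁ a₂ h₂ h) le_rfl b hb
    exact ⟨a, ha, hab.symm⟩
  · intro a ha
    obtain ⟨l, hli⟩ := hl a ha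
    have h : γ' + a = σ a + fun i => 2 * Real.pi * l i := funext fun i => by
      simpa using hli i
    rw [h, hF]

/-- Characters with `M`-divisible frequency are trivial on `Γ*`. -/
lemma tc_div_eq_one (hdil : IsDilation M) {Γstar : Finset (Fin n → ℝ)}
    (hΓ : FreqReps M Γstar) (l : Fin n → ℤ) {γ : Fin n → ℝ} (hγ : γ ∈ Γstar) :
    tc (M.mulVec l) γ = 1 := by
  obtain ⟨m, hm⟩ := hΓ.2.1 γ hγ
  set u : Fin n → ℝ := fun j => ((M.mulVec l) j : ℝ) with hu
  set w : Fin n → ℝ := (Mr M)⁻¹.transpose.mulVec (fun j => (m j : ℝ)) with hw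
  have hdot : u ⬝ᵥ w = ((l ⬝ᵥ m : ℤ) : ℝ) := by
    rw [hu, cast_mulVec, hw, dotProduct_mulVec, vecMul_transpose, Matrix.mulVec_mulVec,
      inv_mul_self hdil, Matrix.one_mulVec]
    simp only [dotProduct]
    push_cast
    rfl
  have harg : ∑ j, u j * γ j = 2 * Real.pi * ((l ⬝ᵥ m : ℤ) : ℝ) := by
    have : ∀ j, u j * γ j = 2 * Real.pi * (u j * w j) := fun j => by rw [hm j]; ring
    rw [Finset.sum_congr rfl fun j _ => this j, ← Finset.mul_sum]
    rw [show ∑ j, u j * w j = u ⬝ᵥ w from rfl, hdot]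
  have hargC : Complex.I * ∑ j, ((M.mulVec l) j : ℂ) * (γ j : ℂ)
      = ((l ⬝ᵥ m : ℤ) : ℂ) * (2 * Real.pi * Complex.I) := by
    have hcast : ∑ j, ((M.mulVec l) j : ℂ) * (γ j : ℂ) = ((∑ j, u j * γ j : ℝ) : ℂ) := by
      rw [hu]; push_cast; rfl
    rw [hcast, harg]
    push_cast
    ring
  rw [tc, hargC, Complex.exp_int_mul_two_pi_mul_I]

/-- Characters with non-`M`-divisible frequency sum to zero over `Γ*`. -/
lemma charSum_eq_zero (hdil : IsDilation M) {Γstar : Finset (Fin n → ℝ)}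
    (hΓ : FreqReps M Γstar) {k : Fin n → ℤ} (hk : ¬ ∃ l, k = M.mulVec l) :
    ∑ γ ∈ Γstar, tc k γ = 0 := by
  have hex : ∃ γ₀ ∈ Γstar, tc k γ₀ ≠ 1 := by
    by_contra hcon
    push_neg at hcon
    apply hk
    have hint : ∀ i : Fin n, ∃ z : ℤ,
        ((Mr M)⁻¹.mulVec (fun j => (k j : ℝ))) i = (z : ℝ) := by
      intro i
      obtain ⟨γ, hγmem, l, hli⟩ := (hΓ.2.2 (Pi.single i 1)).exists
      set w : Fin n → ℝ :=
        (Mr M)⁻¹.transpose.mulVec (fun j => ((Pi.single i 1 : Fin n → ℤ) j : ℝ)) with hw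
      have hveq : (fun j => 2 * Real.pi * w j) = γ + fun j => 2 * Real.pi * (l j : ℝ) :=
        funext fun j => by simpa using hli j
      have h1 : tc k (fun j => 2 * Real.pi * w j) = 1 := by
        rw [hveq, tc_periodic]
        exact hcon γ hγmem
      have hsingle : (fun j => ((Pi.single i 1 : Fin n → ℤ) j : ℝ)) = Pi.single i (1 : ℝ) := by
        funext j
        rcases eq_or_ne j i with rfl | hji
        · simp
        · simp [Pi.single_apply, hji]
      have hdot : (fun j => (k j : ℝ)) ⬝ᵥ w = ((Mr M)⁻¹.mulVec (fun j => (k j : ℝ))) i := by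
        rw [hw, hsingle, dotProduct_mulVec, vecMul_transpose, dotProduct_single, mul_one]
      have harg : Complex.I * ∑ j, (k j : ℂ) * ((2 * Real.pi * w j : ℝ) : ℂ)
          = ((2 * Real.pi * (((Mr M)⁻¹.mulVec (fun j => (k j : ℝ))) i) : ℝ) : ℂ) * Complex.I := by
        have : ∑ j, (k j : ℂ) * ((2 * Real.pi * w j : ℝ) : ℂ)
            = ((∑ j, (k j : ℝ) * (2 * Real.pi * w j) : ℝ) : ℂ) := by push_cast; rfl
        rw [this]
        have h2 : ∑ j, (k j : ℝ) * (2 * Real.pi * w j)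
            = 2 * Real.pi * ((fun j => (k j : ℝ)) ⬝ᵥ w) := by
          simp only [dotProduct, Finset.mul_sum]
          refine Finset.sum_congr rfl fun j _ => ?_
          ring
        rw [h2, hdot]
        ring
      rw [tc, harg, Complex.exp_eq_one_iff] at h1
      obtain ⟨z, hz⟩ := h1
      refine ⟨z, ?_⟩
      have hC : ((2 * Real.pi * (((Mr M)⁻¹.mulVec (fun j => (k j : ℝ))) i) : ℝ) : ℂ)
          = ((2 * Real.pi * (z : ℝ) : ℝ) : ℂ) := by
        have := mul_right_cancel₀ Complex.I_ne_zero
          (hz.trans (by push_cast; ring : ((z : ℂ) * (2 * ↑Real.pi * Complex.I))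
            = ((2 * Real.pi * (z : ℝ) : ℝ) : ℂ) * Complex.I))
        exact this
      have hR : 2 * Real.pi * (((Mr M)⁻¹.mulVec (fun j => (k j : ℝ))) i)
          = 2 * Real.pi * (z : ℝ) := Complex.ofReal_inj.1 hC
      have h2pi : (2 * Real.pi) ≠ 0 := by positivity
      exact mul_left_cancel₀ h2pi hR
    choose zf hzf using hint
    refine ⟨zf, ?_⟩
    have hre : (fun j => (k j : ℝ)) = (Mr M).mulVec (fun j => (zf j : ℝ)) := by
      have h3 : (Mr M)⁻¹.mulVec (fun j => (k j : ℝ)) = fun j => (zf j : ℝ) := funext hzf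
      rw [← h3, Matrix.mulVec_mulVec, mul_inv_self hdil, Matrix.one_mulVec]
    funext j
    have := congrFun (hre.trans (cast_mulVec zf).symm) j
    exact_mod_cast this
  obtain ⟨γ₀, hγ₀, hne⟩ := hex
  have h1 : ∑ γ ∈ Γstar, tc k (γ₀ + γ) = ∑ γ ∈ Γstar, tc k γ :=
    sum_shift hΓ hγ₀ (tc k) (tc_periodic k)
  have h2 : ∑ γ ∈ Γstar, tc k (γ₀ + γ) = tc k γ₀ * ∑ γ ∈ Γstar, tc k γ := by
    rw [Finset.mul_sum]
    exact Finset.sum_congr rfl fun γ _ => tc_add_arg k γ₀ γ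
  have h3 : (tc k γ₀ - 1) * ∑ γ ∈ Γstar, tc k γ = 0 := by
    rw [sub_mul, one_mul, ← h2, h1, sub_self]
  exact (mul_eq_zero.1 h3).resolve_left (sub_ne_zero.2 hne)

lemma tc_MT (hdil : IsDilation M) (l : Fin n → ℤ) (ω : Fin n → ℝ) :
    tc l (MT M ω) = tc (M.mulVec l) ω := by
  unfold tc MT
  congr 1
  have hre : ∑ j, (l j : ℝ) * ((Mr M).transpose.mulVec ω) j
      = ∑ j, ((M.mulVec l) j : ℝ) * ω j := by
    rw [show ∑ j, (l j : ℝ) * ((Mr M).transpose.mulVec ω) j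
        = (fun j => (l j : ℝ)) ⬝ᵥ ((Mr M).transpose.mulVec ω) from rfl,
      dotProduct_mulVec, vecMul_transpose]
    rw [show ((Mr M).mulVec fun j => (l j : ℝ)) ⬝ᵥ ω
        = ∑ j, ((Mr M).mulVec fun j => (l j : ℝ)) j * ω j from rfl]
    refine Finset.sum_congr rfl fun j _ => ?_
    rw [← cast_mulVec]
  have hl : ∑ j, (l j : ℂ) * (((Mr M).transpose.mulVec ω) j : ℂ)
      = ((∑ j, (l j : ℝ) * ((Mr M).transpose.mulVec ω) j : ℝ) : ℂ) := by push_cast; rfl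
  have hr : ∑ j, ((M.mulVec l) j : ℂ) * (ω j : ℂ)
      = ((∑ j, ((M.mulVec l) j : ℝ) * ω j : ℝ) : ℂ) := by push_cast; rfl
  rw [hl, hr, hre]

/-- The key averaging lemma: summing a trig poly over Γ*-translates gives a trig
poly in `Mᵀ ω`. -/
lemma avg (hdil : IsDilation M) {Γstar : Finset (Fin n → ℝ)} (hΓ : FreqReps M Γstar)
    {f : (Fin n → ℝ) → ℂ} (hf : IsTrigPoly f) :
    ∃ a : (Fin n → ℝ) → ℂ, IsTrigPoly a ∧ ∀ ω, a (MT M ω) = ∑ γ ∈ Γstar, f (ω + γ) := by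
  classical
  obtain ⟨s, c, hc⟩ := hf
  set D : (Fin n → ℤ) → Prop := fun k => ∃ l, k = M.mulVec l with hD
  set linv : (Fin n → ℤ) → (Fin n → ℤ) := fun k => if h : D k then h.choose else 0 with hlinv
  have key : ∀ k, D k → k = M.mulVec (linv k) := by
    intro k hk
    rw [hlinv]
    simp only [dif_pos hk]
    exact hk.choose_spec
  set s' := (s.filter D).image linv with hs'
  refine ⟨fun y => ∑ l ∈ s', ((Γstar.card : ℂ) * c (M.mulVec l))
      * Complex.exp (Complex.I * ∑ j, (l j : ℂ) * (y j : ℂ)),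
    ⟨s', fun l => (Γstar.card : ℂ) * c (M.mulVec l), fun y => rfl⟩, ?_⟩
  intro ω
  have hstep1 : ∑ γ ∈ Γstar, f (ω + γ) = ∑ k ∈ s, (c k * tc k ω) * ∑ γ ∈ Γstar, tc k γ := by
    calc ∑ γ ∈ Γstar, f (ω + γ) = ∑ γ ∈ Γstar, ∑ k ∈ s, c k * (tc k ω * tc k γ) := by
          refine Finset.sum_congr rfl fun γ _ => ?_
          rw [hc (ω + γ)]
          refine Finset.sum_congr rfl fun k _ => ?_
          rw [show Complex.exp (Complex.I * ∑ j, (k j : ℂ) * (((ω + γ) j : ℝ) : ℂ))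
              = tc k (ω + γ) from rfl, tc_add_arg]
      _ = ∑ k ∈ s, ∑ γ ∈ Γstar, c k * (tc k ω * tc k γ) := Finset.sum_comm
      _ = ∑ k ∈ s, (c k * tc k ω) * ∑ γ ∈ Γstar, tc k γ := by
          refine Finset.sum_congr rfl fun k _ => ?_
          rw [Finset.mul_sum]
          refine Finset.sum_congr rfl fun γ _ => ?_
          ring
  rw [hstep1, ← Finset.sum_filter_add_sum_filter_not s D]
  have hzero : ∑ k ∈ s.filter (fun k => ¬ D k), (c k * tc k ω) * ∑ γ ∈ Γstar, tc k γ = 0 := by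
    refine Finset.sum_eq_zero fun k hk => ?_
    rw [charSum_eq_zero hdil hΓ (Finset.mem_filter.1 hk).2, mul_zero]
  rw [hzero, add_zero]
  show ∑ l ∈ s', ((Γstar.card : ℂ) * c (M.mulVec l)) * tc l (MT M ω) = _
  rw [hs', Finset.sum_image ?inj]
  case inj =>
    intro k₁ h₁ k₂ h₂ h
    rw [key k₁ (Finset.mem_filter.1 h₁).2, key k₂ (Finset.mem_filter.1 h₂).2, h]
  refine Finset.sum_congr rfl fun k hk => ?_
  have hDk := (Finset.mem_filter.1 hk).2
  have hk' := key k hDk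
  have hsum1 : ∑ γ ∈ Γstar, tc k γ = (Γstar.card : ℂ) := by
    have hone : ∀ γ ∈ Γstar, tc k γ = 1 := fun γ hγ => by
      rw [hk']
      exact tc_div_eq_one hdil hΓ (linv k) hγ
    rw [Finset.sum_congr rfl hone, Finset.sum_const, nsmul_eq_mul, mul_one]
  rw [hsum1, tc_MT hdil, ← hk']
  ring

end GinvAux

namespace GinvAux

open Complex Finset Matrix

variable {n : ℕ}

lemma tc_analyticAt (k : Fin n → ℤ) (x : Fin n → ℝ) : AnalyticAt ℝ (tc k) x := by
  have hinner : AnalyticAt ℝ (fun ω : Fin n → ℝ => Complex.I * ∑ j, (k j : ℂ) * (ω j : ℂ)) x := by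
    refine analyticAt_const.mul ?_
    refine Finset.analyticAt_fun_sum _ fun j _ => ?_
    refine analyticAt_const.mul ?_
    exact (Complex.ofRealCLM.comp (ContinuousLinearMap.proj j :
      (Fin n → ℝ) →L[ℝ] ℝ)).analyticAt x
  have hexp : AnalyticAt ℝ Complex.exp (Complex.I * ∑ j, (k j : ℂ) * (x j : ℂ)) :=
    analyticAt_cexp.restrictScalars
  have := AnalyticAt.comp (f := fun ω : Fin n → ℝ => Complex.I * ∑ j, (k j : ℂ) * (ω j : ℂ))
    hexp hinner
  exact this

lemma trig_analyticAt {f : (Fin n → ℝ) → ℂ} (hf : IsTrigPoly f) (x : Fin n → ℝ) :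
    AnalyticAt ℝ f x := by
  obtain ⟨s, c, hc⟩ := hf
  have hfe : f = fun ω => ∑ k ∈ s, c k * tc k ω := funext fun ω => hc ω
  rw [hfe]
  exact Finset.analyticAt_fun_sum _ fun k _ => analyticAt_const.mul (tc_analyticAt k x)

lemma trig_continuous {f : (Fin n → ℝ) → ℂ} (hf : IsTrigPoly f) : Continuous f :=
  continuous_iff_continuousAt.2 fun x => (trig_analyticAt hf x).continuousAt

/-- A trig poly that is not identically zero is nonzero off a nowhere dense set;
in particular we can avoid finitely many translated zero sets simultaneously. -/
lemma exists_forall_ne_zero {q : (Fin n → ℝ) → ℂ} (hq : IsTrigPoly q)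
    (hq0 : ∃ ω, q ω ≠ 0) (Γstar : Finset (Fin n → ℝ)) :
    ∃ ω, ∀ γ ∈ Γstar, q (ω + γ) ≠ 0 := by
  by_contra hcon
  push_neg at hcon
  have hZ : ∀ γ : Fin n → ℝ, IsClosed {ω : Fin n → ℝ | q (ω + γ) = 0} :=
    fun γ => isClosed_eq (trig_continuous (trig_translate hq γ)) continuous_const
  have huniv : (⋃ γ : ↥Γstar, {ω : Fin n → ℝ | q (ω + (γ : Fin n → ℝ)) = 0}) = Set.univ := by
    refine Set.eq_univ_iff_forall.2 fun ω => ?_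
    obtain ⟨γ, hγ, hγ0⟩ := hcon ω
    exact Set.mem_iUnion.2 ⟨⟨γ, hγ⟩, hγ0⟩
  obtain ⟨γ, hγint⟩ := nonempty_interior_of_iUnion_of_closed (fun γ : ↥Γstar => hZ γ) huniv
  obtain ⟨x, hx⟩ := hγint
  have hana : AnalyticOnNhd ℝ (fun ω => q (ω + (γ : Fin n → ℝ))) Set.univ :=
    fun y _ => trig_analyticAt (trig_translate hq γ) y
  have hev : (fun ω => q (ω + (γ : Fin n → ℝ))) =ᶠ[nhds x] 0 := by
    filter_upwards [isOpen_interior.mem_nhds hx] with y hy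
    have hmem : y ∈ {ω : Fin n → ℝ | q (ω + (γ : Fin n → ℝ)) = 0} := interior_subset hy
    simpa using hmem
  have hzero := hana.eqOn_zero_of_preconnected_of_eventuallyEq_zero
    isPreconnected_univ (Set.mem_univ x) hev
  obtain ⟨ω₀, hω₀⟩ := hq0
  exact hω₀ (by simpa using hzero (Set.mem_univ (ω₀ - (γ : Fin n → ℝ))))

end GinvAux

/-- A `G`-invariant rational trigonometric polynomial `f = p/q` (invariant under
translation by every `γ ∈ Γ*`) is a rational trigonometric polynomial in `Mᵀω`:
there is a rational trigonometric polynomial `g = a/b` with `f(ω) = g(Mᵀω)`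
wherever everything is defined. -/
theorem Ginvariant_is_ratTrigPoly_in_MT (n : ℕ) (M : Matrix (Fin n) (Fin n) ℤ)
    (hdil : IsDilation M)
    (Γstar : Finset (Fin n → ℝ)) (hΓstar : FreqReps M Γstar)
    (p q : (Fin n → ℝ) → ℂ) (hp : IsTrigPoly p) (hq : IsTrigPoly q)
    (hq0 : ∃ ω, q ω ≠ 0)
    (hGinv : ∀ γ ∈ Γstar, ∀ ω : Fin n → ℝ, q ω ≠ 0 → q (ω + γ) ≠ 0 →
      p (ω + γ) / q (ω + γ) = p ω / q ω) :
    ∃ a b : (Fin n → ℝ) → ℂ, IsTrigPoly a ∧ IsTrigPoly b ∧ (∃ ω, b ω ≠ 0) ∧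
      ∀ ω : Fin n → ℝ, q ω ≠ 0 → b (MT M ω) ≠ 0 →
        p ω / q ω = a (MT M ω) / b (MT M ω) := by
  classical
  set Q : (Fin n → ℝ) → ℂ := fun v => ∏ γ ∈ Γstar, q (v + γ) with hQdef
  set P : (Fin n → ℝ) → ℂ := fun v => p v * ∏ γ ∈ Γstar.erase 0, q (v + γ) with hPdef
  have hQtrig : IsTrigPoly Q :=
    GinvAux.isTrigPoly_prod Γstar (fun γ v => q (v + γ))
      (fun γ _ => GinvAux.trig_translate hq γ)
  have hPtrig : IsTrigPoly P :=
    GinvAux.trig_mul hp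
      (GinvAux.isTrigPoly_prod (Γstar.erase 0) (fun γ v => q (v + γ))
        (fun γ _ => GinvAux.trig_translate hq γ))
  obtain ⟨a, hatrig, ha⟩ := GinvAux.avg hdil hΓstar hPtrig
  obtain ⟨b, hbtrig, hb⟩ := GinvAux.avg hdil hΓstar hQtrig
  have hQshift : ∀ γ' ∈ Γstar, ∀ ω : Fin n → ℝ,
      (∏ γ ∈ Γstar, q ((ω + γ') + γ)) = Q ω := by
    intro γ' hγ' ω
    have hper : ∀ v (l : Fin n → ℤ),
        q (ω + (v + fun i => 2 * Real.pi * l i)) = q (ω + v) := by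
      intro v l
      have h1 : ω + (v + fun i => 2 * Real.pi * (l i : ℝ))
          = (ω + v) + fun i => 2 * Real.pi * (l i : ℝ) := by rw [← add_assoc]
      rw [h1, GinvAux.trig_periodic hq]
    have h2 := GinvAux.prod_shift hΓstar hγ' (fun v => q (ω + v)) hper
    calc ∏ γ ∈ Γstar, q ((ω + γ') + γ) = ∏ γ ∈ Γstar, q (ω + (γ' + γ)) := by
          refine Finset.prod_congr rfl fun γ _ => ?_
          rw [add_assoc]
      _ = ∏ γ ∈ Γstar, q (ω + γ) := h2
  have hbQ : ∀ ω, b (MT M ω) = (Γstar.card : ℂ) * Q ω := by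
    intro ω
    rw [hb ω]
    have hconst : ∀ γ ∈ Γstar, Q (ω + γ) = Q ω := fun γ hγ => hQshift γ hγ ω
    rw [Finset.sum_congr rfl hconst, Finset.sum_const, nsmul_eq_mul]
  have hNne : (Γstar.card : ℂ) ≠ 0 :=
    Nat.cast_ne_zero.2 (Finset.card_ne_zero_of_mem hΓstar.1)
  refine ⟨a, b, hatrig, hbtrig, ?_, ?_⟩
  · obtain ⟨ω₀, hω₀⟩ := GinvAux.exists_forall_ne_zero hq hq0 Γstar
    refine ⟨MT M ω₀, ?_⟩
    rw [hbQ ω₀]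
    exact mul_ne_zero hNne (Finset.prod_ne_zero_iff.2 fun γ hγ => hω₀ γ hγ)
  · intro ω hqω hbω
    have hQω : Q ω ≠ 0 := by
      intro h
      exact hbω (by rw [hbQ ω, h, mul_zero])
    have hqγ : ∀ γ ∈ Γstar, q (ω + γ) ≠ 0 := Finset.prod_ne_zero_iff.1 hQω
    have hPval : ∀ γ' ∈ Γstar, P (ω + γ') = (p ω / q ω) * Q ω := by
      intro γ' hγ'
      have hqne := hqγ γ' hγ'
      have hprod : q ((ω + γ') + 0) * ∏ γ ∈ Γstar.erase 0, q ((ω + γ') + γ) = Q ω :=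
        (Finset.mul_prod_erase Γstar (fun γ => q ((ω + γ') + γ)) hΓstar.1).trans
          (hQshift γ' hγ' ω)
      rw [add_zero] at hprod
      have hPq : P (ω + γ') = p (ω + γ') * (Q ω / q (ω + γ')) := by
        have h2 : (∏ γ ∈ Γstar.erase 0, q ((ω + γ') + γ)) = Q ω / q (ω + γ') := by
          rw [eq_div_iff hqne, mul_comm]
          exact hprod
        show p (ω + γ') * (∏ γ ∈ Γstar.erase 0, q ((ω + γ') + γ)) = _
        rw [h2]
      rw [hPq]
      calc p (ω + γ') * (Q ω / q (ω + γ'))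
          = (p (ω + γ') / q (ω + γ')) * Q ω := by ring
        _ = (p ω / q ω) * Q ω := by rw [hGinv γ' hγ' ω hqω hqne]
    have haval : a (MT M ω) = (Γstar.card : ℂ) * ((p ω / q ω) * Q ω) := by
      rw [ha ω, Finset.sum_congr rfl hPval, Finset.sum_const, nsmul_eq_mul]
    rw [haval, hbQ ω, mul_div_mul_left _ _ hNne, mul_div_assoc, div_self hQω, mul_one]
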